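/- For x ≥ 2, ∑_{p ≤ x, p prime} 1/p = log log x + b + O(1/log x) for some absolute constant b. -/

import Mathlib

open Finset Real MeasureTheory Set

namespace MertensAux


/-- The primes up to `n`. -/
def Pf (n : ℕ) : Finset ℕ := (Finset.range (n+1)).filter Nat.Prime

lemma mem_Pf {n q : ℕ} : q ∈ Pf n ↔ q.Prime ∧ q ≤ n := by
  simp [Pf, Nat.lt_succ_iff, and_comm]

lemma legendre {p n : ℕ} (hp : p.Prime) (hn : n ≠ 0) :
    (Nat.factorial n).factorization p = ∑ i ∈ Ico 1 n, n / p ^ i := by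
  haveI := Fact.mk hp
  rw [Nat.factorization_def _ hp, padicValNat_factorial (Nat.log_lt_self p hn)]

lemma primeFactors_factorial (n : ℕ) : (Nat.factorial n).primeFactors = Pf n := by
  ext q
  simp only [Nat.mem_primeFactors, mem_Pf]
  constructor
  · rintro ⟨hq, hdvd, -⟩
    exact ⟨hq, (Nat.Prime.dvd_factorial hq).mp hdvd⟩
  · rintro ⟨hq, hle⟩
    exact ⟨hq, (Nat.Prime.dvd_factorial hq).mpr hle, (Nat.factorial_ne_zero n)⟩

lemma log_factorial_eq (n : ℕ) :
    Real.log (Nat.factorial n) = ∑ p ∈ Pf n, ((Nat.factorial n).factorization p : ℝ) * Real.log p := by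
  conv_lhs => rw [← Nat.factorization_prod_pow_eq_self (Nat.factorial_ne_zero n)]
  rw [Finsupp.prod]
  rw [show (Nat.factorial n).factorization.support = Pf n from by
        rw [Nat.support_factorization, primeFactors_factorial]]
  rw [Nat.cast_prod, Real.log_prod]
  · refine Finset.sum_congr rfl fun p hp => ?_
    rw [Nat.cast_pow, Real.log_pow]
  · intro p hp
    have hp' := (mem_Pf.mp hp).1
    have : (0:ℕ) < p ^ (Nat.factorial n).factorization p := pow_pos hp'.pos _
    exact_mod_cast this.ne' 


lemma chebyshev (n : ℕ) : ∑ p ∈ Pf n, Real.log p ≤ n * Real.log 4 := by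
  have h1 : ∑ p ∈ Pf n, Real.log p = Real.log (∏ p ∈ Pf n, (p:ℝ)) := by
    rw [Real.log_prod]
    intro p hp
    exact_mod_cast (mem_Pf.mp hp).1.pos.ne'
  rw [h1]
  have h2 : (∏ p ∈ Pf n, (p:ℝ)) = ((primorial n : ℕ) : ℝ) := by
    rw [primorial]
    push_cast
    rfl
  rw [h2]
  calc Real.log ((primorial n : ℕ) : ℝ) ≤ Real.log ((4^n : ℕ) : ℝ) := by
        apply Real.log_le_log (by exact_mod_cast (primorial_pos n))
        exact_mod_cast primorial_le_4_pow n
    _ = n * Real.log 4 := by push_cast; rw [Real.log_pow]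

lemma logfac_upper (n : ℕ) : Real.log (Nat.factorial n) ≤ n * Real.log n := by
  have h : Nat.factorial n = ∏ i ∈ range n, (i+1) := (Finset.prod_range_add_one_eq_factorial n).symm
  rw [h]
  push_cast
  rw [Real.log_prod (fun i _ => by positivity)]
  calc ∑ i ∈ range n, Real.log ((i:ℝ)+1) ≤ ∑ i ∈ range n, Real.log n := by
        apply Finset.sum_le_sum
        intro i hi
        apply Real.log_le_log (by positivity)
        have := Finset.mem_range.mp hi
        exact_mod_cast Nat.succ_le_of_lt this
    _ = n * Real.log n := by rw [Finset.sum_const, card_range, nsmul_eq_mul]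

lemma logfac_lower (n : ℕ) (hn : 1 ≤ n) :
    (n:ℝ) * Real.log n - n + 1 ≤ Real.log (Nat.factorial n) := by
  induction n with
  | zero => omega
  | succ m ih =>
    rcases Nat.eq_or_lt_of_le hn with h | h
    · simp [← h]
    · have hm : 1 ≤ m := by omega
      have ihm := ih hm
      have hm0 : (0:ℝ) < m := by exact_mod_cast hm
      have hstep : ((m:ℝ)+1) * Real.log (m+1) - m * Real.log m ≤ Real.log (m+1) + 1 := by
        have hlog : Real.log ((m+1)/m) ≤ ((m:ℝ)+1)/m - 1 :=
          Real.log_le_sub_one_of_pos (by positivity)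
        rw [Real.log_div (by positivity) (by positivity)] at hlog
        have h2 : ((m:ℝ)+1)/m - 1 = 1/m := by field_simp; ring
        rw [h2] at hlog
        have h3 : (m:ℝ) * (Real.log (m+1) - Real.log m) ≤ 1 := by
          rw [mul_comm]
          calc (Real.log (m+1) - Real.log m) * m ≤ (1/m) * m := by
                apply mul_le_mul_of_nonneg_right hlog hm0.le
            _ = 1 := by field_simp
        nlinarith
      have hfac : Real.log (Nat.factorial (m+1)) =
          Real.log (Nat.factorial m) + Real.log (m+1) := by
        rw [Nat.factorial_succ]
        push_cast
        rw [Real.log_mul (by positivity) (by exact_mod_cast (Nat.factorial_pos m).ne'), add_comm]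
      push_cast
      rw [hfac]
      push_cast at ihm
      linarith

lemma sqrt_telescope {m : ℝ} (hm : 2 ≤ m) :
    2 * Real.log m / m^2 ≤ 8 * ((Real.sqrt (m-1))⁻¹ - (Real.sqrt m)⁻¹) := by
  set a := Real.sqrt (m-1) with ha
  set b := Real.sqrt m with hb
  have hm0 : (0:ℝ) < m := by linarith
  have ha2 : a^2 = m - 1 := Real.sq_sqrt (by linarith)
  have hb2 : b^2 = m := Real.sq_sqrt hm0.le
  have ha1 : 1 ≤ a := Real.one_le_sqrt.mpr (by linarith)
  have hb1 : 1 ≤ b := Real.one_le_sqrt.mpr (by linarith)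
  have hab : a ≤ b := Real.sqrt_le_sqrt (by linarith)
  have hd : (b - a) * (b + a) = 1 := by nlinarith
  have hlogb : Real.log b = Real.log m / 2 := Real.log_sqrt hm0.le
  have hlogb' : Real.log b ≤ b - 1 := Real.log_le_sub_one_of_pos (by linarith)
  have hlm : Real.log m ≤ 2 * b := by
    have : Real.log m = 2 * Real.log b := by rw [hlogb]; ring
    rw [this]; linarith
  have hkey : 4 * b / b^4 ≤ 8 * (a⁻¹ - b⁻¹) := by
    have h1 : a⁻¹ - b⁻¹ = (b - a) / (a * b) := by
      field_simp
    have hba' : 1 ≤ 2*b*(b-a) := by nlinarith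
    rw [h1, mul_div_assoc', div_le_div_iff₀ (by positivity) (by positivity)]
    -- 4*b*(a*b) ≤ 8*(b-a)*b^4
    nlinarith [mul_le_mul_of_nonneg_left hba' (by positivity : (0:ℝ) ≤ 4*b^3),
      mul_le_mul_of_nonneg_right hab (by positivity : (0:ℝ) ≤ b^2),
      mul_le_mul_of_nonneg_left hab (by positivity : (0:ℝ) ≤ 4*b^2)]
  calc 2 * Real.log m / m^2 ≤ 4 * b / b^4 := by
        rw [div_le_div_iff₀ (by positivity) (by positivity)]
        have hm2 : m^2 = b^4 := by
          have : b^4 = (b^2)^2 := by ring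
          rw [this, hb2]
        rw [hm2]
        nlinarith [Real.log_nonneg (by linarith : (1:ℝ) ≤ m),
          pow_pos (by linarith : (0:ℝ) < b) 4]
    _ ≤ 8 * (a⁻¹ - b⁻¹) := hkey

lemma sum_log_sq_le (n : ℕ) : ∑ m ∈ Icc 2 n, 2 * Real.log m / (m:ℝ)^2 ≤ 8 := by
  have key : ∀ k : ℕ, 1 ≤ k → ∑ m ∈ Icc 2 k, 2 * Real.log m / (m:ℝ)^2
      ≤ 8 * (1 - (Real.sqrt k)⁻¹) := by
    intro k hk
    induction k, hk using Nat.le_induction with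
    | base => simp
    | succ j hj ih =>
      rw [Finset.sum_Icc_succ_top (by omega)]
      have h1 := sqrt_telescope (m := ((j:ℝ)+1))
        (by
          have : (1:ℝ) ≤ (j:ℝ) := by exact_mod_cast hj
          linarith)
      have h2 : ((j:ℝ)+1-1) = (j:ℝ) := by ring
      rw [h2] at h1
      push_cast
      push_cast at ih
      linarith
  rcases le_or_gt 2 n with h | h
  · have h1 := key n (by omega)
    have h2 : 0 ≤ (Real.sqrt n)⁻¹ := by positivity
    linarith
  · rw [Finset.Icc_eq_empty (by omega)]
    simp


lemma nat_div_lower {n p : ℕ} (hp : 0 < p) : (n:ℝ)/p - 1 ≤ ((n/p : ℕ):ℝ) := by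
  have h : n < p * (n/p) + p := by
    have := Nat.div_add_mod n p
    have := Nat.mod_lt n hp
    omega
  have h2 : (n:ℝ) < p * ((n/p : ℕ):ℝ) + p := by exact_mod_cast h
  have hp' : (0:ℝ) < p := by exact_mod_cast hp
  rw [sub_le_iff_le_add, div_le_iff₀ hp']
  nlinarith

lemma legendre_lower {p n : ℕ} (hp : p.Prime) (hn : 2 ≤ n) (hpn : p ≤ n) :
    (n:ℝ) / p - 1 ≤ (((Nat.factorial n).factorization p : ℕ) : ℝ) := by
  rw [legendre hp (by omega)]
  have h1 : (n / p : ℕ) ≤ ∑ i ∈ Ico 1 n, n / p ^ i := by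
    have h : (n / p : ℕ) = n / p ^ 1 := by rw [pow_one]
    rw [h]
    exact Finset.single_le_sum (f := fun i => n / p ^ i) (fun i _ => Nat.zero_le _)
      (Finset.mem_Ico.mpr ⟨le_refl 1, by omega⟩)
  calc (n:ℝ)/p - 1 ≤ ((n/p : ℕ):ℝ) := nat_div_lower hp.pos
    _ ≤ _ := by exact_mod_cast h1

lemma legendre_upper {p n : ℕ} (hp : p.Prime) (hn : 2 ≤ n) :
    (((Nat.factorial n).factorization p : ℕ) : ℝ) ≤ (n:ℝ)/p + n * (2 / (p:ℝ)^2) := by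
  have hp0 : (0:ℝ) < p := by exact_mod_cast hp.pos
  have hp2 : (2:ℝ) ≤ p := by exact_mod_cast hp.two_le
  rw [legendre hp (by omega)]
  rw [Finset.sum_eq_sum_Ico_succ_bot (by omega : 1 < n) (fun i => n / p ^ i)]
  push_cast
  have hA1 : ((n / p ^ 1 : ℕ):ℝ) ≤ (n:ℝ)/p := by
    rw [pow_one]
    exact Nat.cast_div_le
  have hB : (∑ i ∈ Ico 2 n, ((n / p ^ i : ℕ):ℝ)) ≤ (n:ℝ) * (2 / (p:ℝ)^2) := by
    set r : ℝ := (p:ℝ)⁻¹ with hr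
    have hr0 : 0 ≤ r := by positivity
    have hr1 : r < 1 := by
      rw [hr, inv_lt_one_iff₀]
      right; linarith
    have hrhalf : r ≤ 1/2 := by
      rw [hr, inv_le_comm₀ hp0 (by norm_num)]
      linarith
    have step1 : (∑ i ∈ Ico 2 n, ((n / p ^ i : ℕ):ℝ)) ≤ ∑ i ∈ Ico 2 n, (n:ℝ) * r ^ i := by
      apply Finset.sum_le_sum
      intro i _
      calc ((n / p ^ i : ℕ):ℝ) ≤ (n:ℝ)/((p:ℝ)^i) := by
            have := Nat.cast_div_le (m := n) (n := p ^ i) (α := ℝ)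
            push_cast at this
            exact this
        _ = (n:ℝ) * r ^ i := by
            rw [hr, div_eq_mul_inv, inv_pow]
    have step2 : ∑ i ∈ Ico 2 n, (n:ℝ) * r ^ i = (n:ℝ) * (r^2 * ∑ j ∈ range (n-2), r ^ j) := by
      rw [← Finset.mul_sum, Finset.sum_Ico_eq_sum_range]
      congr 1
      rw [Finset.mul_sum]
      refine Finset.sum_congr rfl fun j _ => ?_
      rw [← pow_add]
    have step3 : ∑ j ∈ range (n-2), r ^ j ≤ (1 - r)⁻¹ := by
      calc ∑ j ∈ range (n-2), r ^ j ≤ ∑' j : ℕ, r ^ j :=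
            Summable.sum_le_tsum _ (fun i _ => by positivity) (summable_geometric_of_lt_one hr0 hr1)
        _ = (1 - r)⁻¹ := tsum_geometric_of_lt_one hr0 hr1
    have step4 : (1 - r)⁻¹ ≤ 2 := by
      rw [inv_le_comm₀ (by linarith) (by norm_num)]
      linarith
    have step5 : r^2 * ∑ j ∈ range (n-2), r ^ j ≤ r^2 * 2 := by
      apply mul_le_mul_of_nonneg_left (step3.trans step4) (by positivity)
    have step6 : r^2 * 2 = 2 / (p:ℝ)^2 := by
      rw [hr, inv_pow]
      field_simp
    calc (∑ i ∈ Ico 2 n, ((n / p ^ i : ℕ):ℝ)) ≤ ∑ i ∈ Ico 2 n, (n:ℝ) * r ^ i := step1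
      _ = (n:ℝ) * (r^2 * ∑ j ∈ range (n-2), r ^ j) := step2
      _ ≤ (n:ℝ) * (2 / (p:ℝ)^2) := by
          apply mul_le_mul_of_nonneg_left _ (by positivity)
          rw [← step6]; exact step5
  linarith

theorem mertens_first {n : ℕ} (hn : 2 ≤ n) :
    |(∑ p ∈ Pf n, Real.log p / p) - Real.log n| ≤ 9 := by
  have hn0 : (0:ℝ) < n := by positivity
  have hn1 : (1:ℝ) ≤ n := by exact_mod_cast (by omega : 1 ≤ n)
  set A := ∑ p ∈ Pf n, Real.log p / p with hA
  -- lower bound for log n!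
  have hlow : (n:ℝ) * A - n * Real.log 4 ≤ Real.log (Nat.factorial n) := by
    rw [log_factorial_eq]
    have h1 : ∀ p ∈ Pf n, ((n:ℝ)/p - 1) * Real.log p ≤
        (((Nat.factorial n).factorization p : ℕ) : ℝ) * Real.log p := by
      intro p hp
      obtain ⟨hpp, hple⟩ := mem_Pf.mp hp
      exact mul_le_mul_of_nonneg_right (legendre_lower hpp hn hple)
        (Real.log_nonneg (by exact_mod_cast hpp.one_lt.le))
    calc (n:ℝ) * A - n * Real.log 4
        ≤ (n:ℝ) * A - ∑ p ∈ Pf n, Real.log p := by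
          have := chebyshev n
          linarith
      _ = ∑ p ∈ Pf n, ((n:ℝ)/p - 1) * Real.log p := by
          rw [hA, Finset.mul_sum, ← Finset.sum_sub_distrib]
          refine Finset.sum_congr rfl fun p hp => ?_
          have hp0 : (0:ℝ) < p := by exact_mod_cast (mem_Pf.mp hp).1.pos
          field_simp
      _ ≤ _ := Finset.sum_le_sum h1
  -- upper bound for log n!
  have hup : Real.log (Nat.factorial n) ≤ (n:ℝ) * A + 8 * n := by
    rw [log_factorial_eq]
    have h1 : ∀ p ∈ Pf n, (((Nat.factorial n).factorization p : ℕ) : ℝ) * Real.log p ≤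
        ((n:ℝ)/p) * Real.log p + (n:ℝ) * (2 * Real.log p / (p:ℝ)^2) := by
      intro p hp
      obtain ⟨hpp, hple⟩ := mem_Pf.mp hp
      have hlp : 0 ≤ Real.log p := Real.log_nonneg (by exact_mod_cast hpp.one_lt.le)
      have := mul_le_mul_of_nonneg_right (legendre_upper hpp (n := n) hn) hlp
      calc (((Nat.factorial n).factorization p : ℕ) : ℝ) * Real.log p
          ≤ ((n:ℝ)/p + n * (2/(p:ℝ)^2)) * Real.log p := this
        _ = ((n:ℝ)/p) * Real.log p + (n:ℝ) * (2 * Real.log p / (p:ℝ)^2) := by ring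
    have h2 : ∑ p ∈ Pf n, (2 * Real.log p / (p:ℝ)^2) ≤ 8 := by
      have hsub : Pf n ⊆ Icc 2 n := by
        intro p hp
        obtain ⟨hpp, hple⟩ := mem_Pf.mp hp
        exact Finset.mem_Icc.mpr ⟨hpp.two_le, hple⟩
      calc ∑ p ∈ Pf n, (2 * Real.log p / (p:ℝ)^2)
          ≤ ∑ m ∈ Icc 2 n, (2 * Real.log m / (m:ℝ)^2) := by
            apply Finset.sum_le_sum_of_subset_of_nonneg hsub
            intro m hm _
            have h2m := (Finset.mem_Icc.mp hm).1
            have : (1:ℝ) ≤ m := by exact_mod_cast (by omega : 1 ≤ m)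
            have := Real.log_nonneg this
            positivity
        _ ≤ 8 := sum_log_sq_le n
    calc ∑ p ∈ Pf n, (((Nat.factorial n).factorization p : ℕ) : ℝ) * Real.log p
        ≤ ∑ p ∈ Pf n, (((n:ℝ)/p) * Real.log p + (n:ℝ) * (2 * Real.log p / (p:ℝ)^2)) :=
          Finset.sum_le_sum h1
      _ = (n:ℝ) * A + (n:ℝ) * ∑ p ∈ Pf n, (2 * Real.log p / (p:ℝ)^2) := by
          rw [Finset.sum_add_distrib]
          congr 1
          · rw [hA, Finset.mul_sum]
            refine Finset.sum_congr rfl fun p hp => ?_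
            have hp0 : (0:ℝ) < p := by exact_mod_cast (mem_Pf.mp hp).1.pos
            field_simp
          · rw [Finset.mul_sum]
      _ ≤ (n:ℝ) * A + 8 * n := by nlinarith
  have hfl := logfac_lower n (by omega)
  have hfu := logfac_upper n
  have hlog4 : Real.log 4 ≤ 3 := by
    have := Real.log_le_sub_one_of_pos (by norm_num : (0:ℝ) < 4)
    linarith
  rw [abs_le]
  constructor
  · -- -9 ≤ A - log n :  n A ≥ log n! - 8n ≥ n log n - n + 1 - 8n
    have : (n:ℝ) * A ≥ (n:ℝ) * Real.log n - 9 * n := by nlinarith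
    have h9 : (n:ℝ) * (A - Real.log n) ≥ -9 * n := by nlinarith
    nlinarith
  · have : (n:ℝ) * A ≤ (n:ℝ) * Real.log n + n * Real.log 4 := by nlinarith
    nlinarith

noncomputable def cf : ℕ → ℝ := fun k => if k.Prime then Real.log k / k else 0
noncomputable def RR : ℝ → ℝ := fun t => ∑ k ∈ Finset.Icc 0 ⌊t⌋₊, cf k
noncomputable def gg : ℝ → ℝ := fun t => (t * Real.log t ^ 2)⁻¹
noncomputable def fI : ℝ → ℝ := fun t => (Real.log t)⁻¹
noncomputable def EE : ℝ → ℝ := fun t => RR t - Real.log t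

lemma cf_nonneg (k : ℕ) : 0 ≤ cf k := by
  unfold cf
  split_ifs with h
  · have h1 : (1:ℝ) ≤ k := by exact_mod_cast h.one_lt.le
    have := Real.log_nonneg h1
    positivity
  · exact le_refl _

lemma RR_eq (t : ℝ) : RR t = ∑ p ∈ Pf ⌊t⌋₊, Real.log p / p := by
  unfold RR Pf
  rw [Finset.sum_filter]
  have h : Finset.Icc 0 ⌊t⌋₊ = Finset.range (⌊t⌋₊ + 1) := by
    ext k; simp [Nat.lt_succ_iff]
  rw [h]
  rfl

lemma RR_mono : Monotone RR := by
  intro s t hst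
  apply Finset.sum_le_sum_of_subset_of_nonneg
  · exact Finset.Icc_subset_Icc_right (Nat.floor_le_floor hst)
  · intro k _ _; exact cf_nonneg k

lemma EE_bound {t : ℝ} (ht : 2 ≤ t) : |EE t| ≤ 10 := by
  have ht0 : (0:ℝ) < t := by linarith
  have hm2 : 2 ≤ ⌊t⌋₊ := Nat.le_floor (by exact_mod_cast ht)
  have h1 := mertens_first hm2
  rw [← RR_eq] at h1
  have hmt : (⌊t⌋₊:ℝ) ≤ t := Nat.floor_le ht0.le
  have hm1 : (1:ℝ) ≤ (⌊t⌋₊:ℝ) := by exact_mod_cast (by omega : 1 ≤ ⌊t⌋₊)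
  have htm : t ≤ 2 * ⌊t⌋₊ := by
    have := Nat.lt_floor_add_one t
    linarith
  have hlog1 : Real.log ⌊t⌋₊ ≤ Real.log t := Real.log_le_log (by linarith) hmt
  have hlog2 : Real.log t ≤ Real.log 2 + Real.log ⌊t⌋₊ := by
    calc Real.log t ≤ Real.log (2 * ⌊t⌋₊) := Real.log_le_log ht0 htm
      _ = Real.log 2 + Real.log ⌊t⌋₊ := Real.log_mul (by norm_num) (by positivity)
  have hl2 : Real.log 2 ≤ 1 := by
    have := Real.log_le_sub_one_of_pos (by norm_num : (0:ℝ) < 2)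
    linarith
  unfold EE
  rw [abs_le] at h1 ⊢
  constructor <;> nlinarith [h1.1, h1.2]

lemma hasDeriv_fI {t : ℝ} (ht : 1 < t) : HasDerivAt fI (-gg t) t := by
  have hlog : Real.log t ≠ 0 := (Real.log_pos ht).ne'
  have h := (Real.hasDerivAt_log (by linarith : t ≠ 0)).inv hlog
  refine h.congr_deriv ?_
  unfold gg
  rw [mul_inv, div_eq_mul_inv]
  ring

lemma gg_nonneg {t : ℝ} (ht : 0 ≤ t) : 0 ≤ gg t := by
  unfold gg; positivity

lemma hasDeriv_negfI {t : ℝ} (ht : 1 < t) : HasDerivAt (fun s => -fI s) (gg t) t := by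
  have := (hasDeriv_fI ht).neg
  exact this.congr_deriv (neg_neg _)

lemma tendsto_negfI : Filter.Tendsto (fun s => -fI s) Filter.atTop (nhds 0) := by
  have h : Filter.Tendsto fI Filter.atTop (nhds 0) :=
    Real.tendsto_log_atTop.inv_tendsto_atTop
  simpa using h.neg

lemma gg_int_Ioi {a : ℝ} (ha : 2 ≤ a) : IntegrableOn gg (Set.Ioi a) := by
  apply integrableOn_Ioi_deriv_of_nonneg' (fun t ht => hasDeriv_negfI (by
    have : a ≤ t := ht
    linarith)) (fun t ht => gg_nonneg (by
    have : a < t := ht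
    linarith)) tendsto_negfI

lemma gg_integral_Ioi {a : ℝ} (ha : 2 ≤ a) : ∫ t in Set.Ioi a, gg t = (Real.log a)⁻¹ := by
  have h := integral_Ioi_of_hasDerivAt_of_tendsto' (f := fun s => -fI s) (f' := gg) (a := a)
    (fun t ht => hasDeriv_negfI (by have : a ≤ t := ht; linarith))
    (gg_int_Ioi ha) tendsto_negfI
  rw [h]
  unfold fI
  ring

lemma measurable_gg : Measurable gg := by
  unfold gg
  exact (measurable_id.mul ((Real.measurable_log.pow_const 2))).inv

lemma measurable_RR : Measurable RR := RR_mono.measurable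

lemma measurable_EE : Measurable EE := measurable_RR.sub Real.measurable_log

lemma ggEE_int_Ioi {a : ℝ} (ha : 2 ≤ a) :
    IntegrableOn (fun t => gg t * EE t) (Set.Ioi a) := by
  apply Integrable.mono' ((gg_int_Ioi ha).const_mul 10)
  · exact (measurable_gg.mul measurable_EE).aestronglyMeasurable
  · rw [ae_restrict_iff' measurableSet_Ioi]
    filter_upwards with t ht
    have ht2 : 2 ≤ t := le_of_lt (lt_of_le_of_lt ha ht)
    rw [Real.norm_eq_abs, abs_mul, abs_of_nonneg (gg_nonneg (by linarith))]
    calc gg t * |EE t| ≤ gg t * 10 := by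
          apply mul_le_mul_of_nonneg_left (EE_bound ht2) (gg_nonneg (by linarith))
      _ = 10 * gg t := by ring

lemma tail_bound {a : ℝ} (ha : 2 ≤ a) :
    |∫ t in Set.Ioi a, gg t * EE t| ≤ 10 * (Real.log a)⁻¹ := by
  have h1 : |∫ t in Set.Ioi a, gg t * EE t| ≤ ∫ t in Set.Ioi a, |gg t| * |EE t| := by
    have := MeasureTheory.norm_integral_le_integral_norm
      (μ := volume.restrict (Set.Ioi a)) (fun t => gg t * EE t)
    simpa [Real.norm_eq_abs, abs_mul] using this
  have h2 : ∫ t in Set.Ioi a, |gg t| * |EE t| ≤ ∫ t in Set.Ioi a, 10 * gg t := by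
    apply integral_mono_of_nonneg
    · filter_upwards with t; positivity
    · exact (gg_int_Ioi ha).const_mul 10
    · rw [Filter.EventuallyLE, ae_restrict_iff' measurableSet_Ioi]
      filter_upwards with t ht
      have ht2 : 2 ≤ t := le_of_lt (lt_of_le_of_lt ha ht)
      show |gg t| * |EE t| ≤ 10 * gg t
      rw [abs_of_nonneg (gg_nonneg (by linarith))]
      calc gg t * |EE t| ≤ gg t * 10 :=
            mul_le_mul_of_nonneg_left (EE_bound ht2) (gg_nonneg (by linarith))
        _ = 10 * gg t := by ring
  have h3 : ∫ t in Set.Ioi a, 10 * gg t = 10 * (Real.log a)⁻¹ := by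
    rw [MeasureTheory.integral_const_mul, gg_integral_Ioi ha]
  linarith

lemma log_two_pos' : (0:ℝ) < Real.log 2 := Real.log_pos (by norm_num)

lemma gg_contOn {a b : ℝ} (ha : 2 ≤ a) : ContinuousOn gg (Set.Icc a b) := by
  unfold gg
  apply ContinuousOn.inv₀
  · exact (continuousOn_id.mul ((Real.continuousOn_log.mono (fun t ht => by
      have : a ≤ t := ht.1
      simp only [Set.mem_compl_iff, Set.mem_singleton_iff]
      intro h; rw [h] at this; linarith)).pow 2))
  · intro t ht
    have ht2 : 2 ≤ t := le_trans ha ht.1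
    have hlog : 0 < Real.log t := Real.log_pos (by linarith)
    positivity

theorem mertens_second' :
    ∃ b C : ℝ, ∀ x : ℝ, 2 ≤ x →
      |(∑ p ∈ (Finset.range (⌊x⌋₊ + 1)).filter Nat.Prime, (1 : ℝ) / p) -
          Real.log (Real.log x) - b| ≤ C / Real.log x := by
  set I : ℝ := ∫ t in Set.Ioi 2, gg t * EE t with hI
  refine ⟨1 - Real.log (Real.log 2) + I, 20, fun x hx => ?_⟩
  have hx1 : (1:ℝ) < x := by linarith
  have hlogx : 0 < Real.log x := Real.log_pos hx1
  have hfloor2 : (2:ℕ) ≤ ⌊x⌋₊ := Nat.le_floor (by exact_mod_cast hx)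
  -- Abel summation on [2, x]
  have hdiff : ∀ t ∈ Set.Icc (2:ℝ) x, DifferentiableAt ℝ fI t :=
    fun t ht => (hasDeriv_fI (by linarith [ht.1])).differentiableAt
  have hderivEq : Set.EqOn (deriv fI) (fun t => -gg t) (Set.Icc 2 x) :=
    fun t ht => (hasDeriv_fI (by linarith [ht.1])).deriv
  have hint : IntegrableOn (deriv fI) (Set.Icc 2 x) := by
    apply IntegrableOn.congr_fun _ hderivEq.symm measurableSet_Icc
    exact ((gg_contOn le_rfl).neg).integrableOn_Icc
  have habel := sum_mul_eq_sub_sub_integral_mul cf (a := 2) (b := x) (f := fI)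
    (by norm_num) hx hdiff hint
  rw [Nat.floor_ofNat] at habel
  -- identify pieces
  have hR2 : (∑ k ∈ Finset.Icc 0 2, cf k) = Real.log 2 / 2 := by
    rw [show Finset.Icc 0 2 = {0, 1, 2} from rfl]
    rw [Finset.sum_insert (by decide), Finset.sum_insert (by decide), Finset.sum_singleton]
    simp [cf, Nat.prime_two, Nat.not_prime_one, Nat.not_prime_zero]
  have hfI2R2 : fI 2 * (∑ k ∈ Finset.Icc 0 2, cf k) = 1/2 := by
    rw [hR2]
    unfold fI
    have h := log_two_pos'
    field_simp
  -- the sum over primes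
  have hsum : (∑ p ∈ (Finset.range (⌊x⌋₊ + 1)).filter Nat.Prime, (1 : ℝ) / p) =
      1/2 + ∑ k ∈ Finset.Ioc 2 ⌊x⌋₊, fI k * cf k := by
    have h1 : ∑ k ∈ Finset.Ioc 2 ⌊x⌋₊, fI k * cf k =
        ∑ k ∈ (Finset.Ioc 2 ⌊x⌋₊).filter Nat.Prime, (1:ℝ) / k := by
      rw [Finset.sum_filter]
      refine Finset.sum_congr rfl fun k hk => ?_
      unfold cf fI
      split_ifs with h
      · have hk2 : (2:ℝ) ≤ k := by exact_mod_cast h.two_le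
        have hlogk : Real.log k ≠ 0 := (Real.log_pos (by linarith)).ne'
        field_simp
      · exact mul_zero _
    have h2 : (Finset.range (⌊x⌋₊ + 1)).filter Nat.Prime =
        insert 2 ((Finset.Ioc 2 ⌊x⌋₊).filter Nat.Prime) := by
      ext q
      simp only [Finset.mem_filter, Finset.mem_range, Finset.mem_insert, Finset.mem_Ioc,
        Nat.lt_succ_iff]
      constructor
      · rintro ⟨hq1, hq2⟩
        rcases eq_or_lt_of_le hq2.two_le with h | h
        · exact Or.inl h.symm
        · exact Or.inr ⟨⟨h, hq1⟩, hq2⟩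
      · rintro (rfl | ⟨⟨h1', h2'⟩, h3⟩)
        · exact ⟨hfloor2, Nat.prime_two⟩
        · exact ⟨h2', h3⟩
    rw [h2, Finset.sum_insert (by simp), h1]
    norm_num
  -- rewrite integral with gg
  have hR_def : ∀ t : ℝ, (∑ k ∈ Finset.Icc 0 ⌊t⌋₊, cf k) = RR t := fun _ => rfl
  have hintEq : ∫ t in Set.Ioc 2 x, deriv fI t * (∑ k ∈ Finset.Icc 0 ⌊t⌋₊, cf k) =
      - ∫ t in Set.Ioc 2 x, gg t * RR t := by
    rw [← integral_neg]
    apply setIntegral_congr_fun measurableSet_Ioc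
    intro t ht
    show deriv fI t * (∑ k ∈ Finset.Icc 0 ⌊t⌋₊, cf k) = -(gg t * RR t)
    rw [hR_def, hderivEq (Set.mem_Icc.mpr ⟨ht.1.le, ht.2⟩)]
    ring
  -- split the integral
  have hint2 : IntegrableOn (fun t => gg t * EE t) (Set.Ioc 2 x) :=
    (ggEE_int_Ioi le_rfl).mono_set Set.Ioc_subset_Ioi_self
  have hint1 : IntegrableOn (fun t => gg t * Real.log t) (Set.Ioc 2 x) := by
    apply IntegrableOn.mono_set _ Set.Ioc_subset_Icc_self
    exact ((gg_contOn le_rfl).mul (Real.continuousOn_log.mono (fun t ht => by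
      simp only [Set.mem_compl_iff, Set.mem_singleton_iff]
      intro h; rw [h] at ht; exact absurd ht.1 (by norm_num)))).integrableOn_Icc
  have hsplit : ∫ t in Set.Ioc 2 x, gg t * RR t =
      (∫ t in Set.Ioc 2 x, gg t * Real.log t) + ∫ t in Set.Ioc 2 x, gg t * EE t := by
    rw [← integral_add hint1 hint2]
    apply setIntegral_congr_fun measurableSet_Ioc
    intro t _
    unfold EE
    ring
  -- the log-log integral
  have hloglog : ∫ t in Set.Ioc 2 x, gg t * Real.log t =
      Real.log (Real.log x) - Real.log (Real.log 2) := by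
    have heq : Set.EqOn (fun t => gg t * Real.log t) (fun t => (t * Real.log t)⁻¹)
        (Set.Ioc 2 x) := by
      intro t ht
      have ht2 : (2:ℝ) < t := ht.1
      have hlog : Real.log t ≠ 0 := (Real.log_pos (by linarith)).ne'
      have ht0 : t ≠ 0 := by linarith
      show gg t * Real.log t = (t * Real.log t)⁻¹
      unfold gg
      field_simp
    rw [setIntegral_congr_fun measurableSet_Ioc heq]
    have hcont : ContinuousOn (fun t => (t * Real.log t)⁻¹) (Set.uIcc 2 x) := by
      rw [Set.uIcc_of_le hx]
      apply ContinuousOn.inv₀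
      · exact continuousOn_id.mul (Real.continuousOn_log.mono (fun t ht => by
          simp only [Set.mem_compl_iff, Set.mem_singleton_iff]
          intro h; rw [h] at ht; exact absurd ht.1 (by norm_num)))
      · intro t ht
        have ht2 : 2 ≤ t := ht.1
        have hlog : 0 < Real.log t := Real.log_pos (by linarith)
        positivity
    have hderivLL : ∀ t ∈ Set.uIcc (2:ℝ) x,
        HasDerivAt (fun s => Real.log (Real.log s)) ((t * Real.log t)⁻¹) t := by
      intro t ht
      rw [Set.uIcc_of_le hx] at ht
      have ht2 : 2 ≤ t := ht.1
      have ht0 : t ≠ 0 := by linarith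
      have hlog : Real.log t ≠ 0 := (Real.log_pos (by linarith)).ne'
      have h := (Real.hasDerivAt_log hlog).comp t (Real.hasDerivAt_log ht0)
      refine h.congr_deriv ?_
      rw [mul_inv]
      ring
    have := intervalIntegral.integral_eq_sub_of_hasDerivAt hderivLL
      (hcont.intervalIntegrable)
    rw [intervalIntegral.integral_of_le hx] at this
    simpa using this
  -- tail decomposition
  have htail_split : I = (∫ t in Set.Ioc 2 x, gg t * EE t) + ∫ t in Set.Ioi x, gg t * EE t := by
    rw [hI, ← Set.Ioc_union_Ioi_eq_Ioi hx]
    exact setIntegral_union (Set.Ioc_disjoint_Ioi le_rfl) measurableSet_Ioi hint2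
      (ggEE_int_Ioi hx)
  -- head term
  have hhead : fI x * (∑ k ∈ Finset.Icc 0 ⌊x⌋₊, cf k) = 1 + EE x * (Real.log x)⁻¹ := by
    rw [hR_def]
    have : RR x = Real.log x + EE x := by unfold EE; ring
    rw [this]
    unfold fI
    field_simp
  -- put it together
  rw [hsum, habel, hfI2R2, hintEq, hsplit, hloglog, hhead]
  have hEx := EE_bound hx
  have htail := tail_bound hx
  have hIeq : (∫ t in Set.Ioc 2 x, gg t * EE t) = I - ∫ t in Set.Ioi x, gg t * EE t := by
    rw [htail_split]; ring
  rw [hIeq]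
  have hgoal : |EE x * (Real.log x)⁻¹ - ∫ t in Set.Ioi x, gg t * EE t| ≤ 20 / Real.log x := by
    calc |EE x * (Real.log x)⁻¹ - ∫ t in Set.Ioi x, gg t * EE t|
        ≤ |EE x * (Real.log x)⁻¹| + |∫ t in Set.Ioi x, gg t * EE t| := abs_sub _ _
      _ ≤ 10 * (Real.log x)⁻¹ + 10 * (Real.log x)⁻¹ := by
          apply add_le_add _ htail
          rw [abs_mul, abs_of_nonneg (by positivity : (0:ℝ) ≤ (Real.log x)⁻¹)]
          apply mul_le_mul_of_nonneg_right hEx (by positivity)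
      _ = 20 / Real.log x := by field_simp; ring
  refine le_trans (le_of_eq ?_) hgoal
  congr 1
  ring


end MertensAux

/-- Mertens' second theorem: `∑_{p ≤ x} 1/p = log log x + b + O(1/log x)` for `x ≥ 2`. -/
theorem mertens_second :
    ∃ b C : ℝ, ∀ x : ℝ, 2 ≤ x →
      |(∑ p ∈ (Finset.range (⌊x⌋₊ + 1)).filter Nat.Prime, (1 : ℝ) / p) -
          Real.log (Real.log x) - b| ≤ C / Real.log x :=
  MertensAux.mertens_second'
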